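/- Let p, q be positive integers and let A be a density matrix indexed by (Fin p × Fin q) (acting on ℂ^p ⊗ ℂ^q) all of whose row sums are zero. If the partial transpose A^pT has at least one nonzero row sum, then A is not separable in ℂ^p ⊗ ℂ^q. -/

import Mathlib

open Matrix BigOperators Kronecker
open scoped ComplexOrder

noncomputable section

/-- The `(p,q)`-partial transpose of a matrix indexed by `Fin p × Fin q`:
`A^pT_{(i,j),(k,l)} = A_{(i,l),(k,j)}`. -/
def ptrans {p q : ℕ} {α : Type*} (A : Matrix (Fin p × Fin q) (Fin p × Fin q) α) :
    Matrix (Fin p × Fin q) (Fin p × Fin q) α :=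
  fun x y => A (x.1, y.2) (y.1, x.2)

/-- A density matrix: Hermitian, positive semidefinite, with trace 1. -/
def IsDensityMatrix {n : Type*} [Fintype n] (ρ : Matrix n n ℂ) : Prop :=
  ρ.IsHermitian ∧ ρ.PosSemidef ∧ ρ.trace = 1

/-- Separability in ℂ^p ⊗ ℂ^q : a finite convex combination of Kronecker products
of density matrices. -/
def SeparableState {p q : ℕ} (A : Matrix (Fin p × Fin q) (Fin p × Fin q) ℂ) : Prop :=
  ∃ (m : ℕ) (c : Fin m → ℝ) (ρ : Fin m → Matrix (Fin p) (Fin p) ℂ)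
    (η : Fin m → Matrix (Fin q) (Fin q) ℂ),
    (∀ i, 0 ≤ c i) ∧ (∑ i, c i) = 1 ∧
    (∀ i, IsDensityMatrix (ρ i)) ∧ (∀ i, IsDensityMatrix (η i)) ∧
    A = ∑ i, (c i : ℂ) • (ρ i ⊗ₖ η i)

/-- Separability of a real matrix, viewed as a complex matrix. -/
def SeparableStateR {p q : ℕ} (A : Matrix (Fin p × Fin q) (Fin p × Fin q) ℝ) : Prop :=
  SeparableState (A.map (fun x => (x : ℂ)))

/-- A square real matrix is line sum symmetric if each row sum equals the
corresponding column sum. -/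
def LineSumSymm {q : ℕ} (B : Matrix (Fin q) (Fin q) ℝ) : Prop :=
  ∀ j, (∑ l, B j l) = ∑ l, B l j

/-- A simple circuit matrix: there are distinct indices `i_1, …, i_k` (`k ≥ 1`) with
`C_{i_m i_{m+1}} = 1` (cyclically) and all other entries 0. -/
def IsSimpleCircuit {q : ℕ} (C : Matrix (Fin q) (Fin q) ℝ) : Prop :=
  ∃ (k : ℕ) (hk : 0 < k) (f : Fin k → Fin q), Function.Injective f ∧
    ∀ a b : Fin q, C a b =
      if ∃ m : Fin k, a = f m ∧ b = f ⟨((m : ℕ) + 1) % k, Nat.mod_lt _ hk⟩ then 1 else 0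

/-- The 2q×2q block matrix `[[A11, A12], [A21, A22]]` indexed by `Fin 2 × Fin q`. -/
def twoBlock {q : ℕ} {α : Type*} (A11 A12 A21 A22 : Matrix (Fin q) (Fin q) α) :
    Matrix (Fin 2 × Fin q) (Fin 2 × Fin q) α :=
  fun a b =>
    if a.1 = 0 then (if b.1 = 0 then A11 a.2 b.2 else A12 a.2 b.2)
    else (if b.1 = 0 then A21 a.2 b.2 else A22 a.2 b.2)

/-- The q×q block `A^{i,k}` of a matrix indexed by `Fin p × Fin q`. -/
def blockOf {p q : ℕ} (A : Matrix (Fin p × Fin q) (Fin p × Fin q) ℝ) (i k : Fin p) :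
    Matrix (Fin q) (Fin q) ℝ :=
  fun j l => A (i, j) (k, l)


lemma split_sum' {p q : ℕ} (u : Fin p → ℂ) (v : Fin q → ℂ) :
    ∑ y : Fin p × Fin q, u y.1 * v y.2 = (∑ a, u a) * (∑ b, v b) := by
  rw [Finset.sum_mul_sum]
  simp [Fintype.sum_prod_type]

lemma quad_sum' {p q : ℕ} (M : Matrix (Fin p) (Fin p) ℂ) (N : Matrix (Fin q) (Fin q) ℂ) :
    ∑ z : Fin p × Fin q, ∑ y : Fin p × Fin q, M z.1 y.1 * N z.2 y.2
    = (∑ a, ∑ b, M a b) * (∑ a, ∑ b, N a b) := by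
  have h1 : ∀ z : Fin p × Fin q, ∑ y : Fin p × Fin q, M z.1 y.1 * N z.2 y.2
      = (∑ b, M z.1 b) * (∑ d, N z.2 d) := fun z => split_sum' _ _
  rw [Finset.sum_congr rfl fun z _ => h1 z]
  exact split_sum' (fun a => ∑ b, M a b) (fun a => ∑ b, N a b)

lemma ones_quad {n : ℕ} (M : Matrix (Fin n) (Fin n) ℂ) :
    star (fun _ : Fin n => (1:ℂ)) ⬝ᵥ (M *ᵥ fun _ => 1) = ∑ a, ∑ b, M a b := by
  simp [dotProduct, mulVec]

theorem stmt0 {p q : ℕ} (hp : 0 < p) (hq : 0 < q)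
    (A : Matrix (Fin p × Fin q) (Fin p × Fin q) ℂ)
    (hA : IsDensityMatrix A)
    (hrow : ∀ x, (∑ y, A x y) = 0)
    (hpt : ∃ x, (∑ y, ptrans A x y) ≠ 0) :
    ¬ SeparableState A := by
  rintro ⟨m, c, ρ, η, hc, hcsum, hρ, hη, hAeq⟩
  obtain ⟨x, hx⟩ := hpt
  apply hx
  have hAent : ∀ z y : Fin p × Fin q,
      A z y = ∑ i, (c i : ℂ) * (ρ i z.1 y.1 * η i z.2 y.2) := by
    intro z y
    rw [hAeq]
    simp [Matrix.sum_apply]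
  have hPnn : ∀ i, (0:ℂ) ≤ ∑ a, ∑ b, ρ i a b := fun i => by
    rw [← ones_quad]; exact (hρ i).2.1.dotProduct_mulVec_nonneg _
  have hQnn : ∀ i, (0:ℂ) ≤ ∑ a, ∑ b, η i a b := fun i => by
    rw [← ones_quad]; exact (hη i).2.1.dotProduct_mulVec_nonneg _
  have htot : ∑ i, (c i : ℂ) * ((∑ a, ∑ b, ρ i a b) * (∑ a, ∑ b, η i a b)) = 0 := by
    have h0 : ∑ z : Fin p × Fin q, ∑ y, A z y = 0 :=
      Finset.sum_eq_zero fun z _ => hrow z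
    calc ∑ i, (c i : ℂ) * ((∑ a, ∑ b, ρ i a b) * (∑ a, ∑ b, η i a b))
        = ∑ i, (c i : ℂ) * ∑ z : Fin p × Fin q, ∑ y : Fin p × Fin q,
            ρ i z.1 y.1 * η i z.2 y.2 := by
          refine Finset.sum_congr rfl fun i _ => ?_
          rw [quad_sum']
      _ = ∑ i, ∑ z : Fin p × Fin q, ∑ y : Fin p × Fin q,
            (c i : ℂ) * (ρ i z.1 y.1 * η i z.2 y.2) := by
          refine Finset.sum_congr rfl fun i _ => ?_
          rw [Finset.mul_sum]
          exact Finset.sum_congr rfl fun z _ => Finset.mul_sum _ _ _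
      _ = ∑ z : Fin p × Fin q, ∑ i, ∑ y : Fin p × Fin q,
            (c i : ℂ) * (ρ i z.1 y.1 * η i z.2 y.2) := Finset.sum_comm
      _ = ∑ z : Fin p × Fin q, ∑ y : Fin p × Fin q, ∑ i,
            (c i : ℂ) * (ρ i z.1 y.1 * η i z.2 y.2) :=
          Finset.sum_congr rfl fun z _ => Finset.sum_comm
      _ = ∑ z : Fin p × Fin q, ∑ y, A z y :=
          Finset.sum_congr rfl fun z _ =>
            Finset.sum_congr rfl fun y _ => (hAent z y).symm
      _ = 0 := h0
  have hterm : ∀ i ∈ Finset.univ,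
      (c i : ℂ) * ((∑ a, ∑ b, ρ i a b) * (∑ a, ∑ b, η i a b)) = 0 := by
    rw [← Finset.sum_eq_zero_iff_of_nonneg]
    · exact htot
    · intro i _
      exact mul_nonneg (by exact_mod_cast hc i) (mul_nonneg (hPnn i) (hQnn i))
  have hexp : ∑ y, ptrans A x y
      = ∑ i, (c i : ℂ) * ((∑ k, ρ i x.1 k) * (∑ l, η i l x.2)) := by
    calc ∑ y : Fin p × Fin q, ptrans A x y
        = ∑ y : Fin p × Fin q, ∑ i, (c i : ℂ) * (ρ i x.1 y.1 * η i y.2 x.2) := by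
          refine Finset.sum_congr rfl fun y _ => ?_
          exact hAent (x.1, y.2) (y.1, x.2)
      _ = ∑ i, ∑ y : Fin p × Fin q, (c i : ℂ) * (ρ i x.1 y.1 * η i y.2 x.2) :=
          Finset.sum_comm
      _ = ∑ i, (c i : ℂ) * ((∑ k, ρ i x.1 k) * (∑ l, η i l x.2)) := by
          refine Finset.sum_congr rfl fun i _ => ?_
          rw [← Finset.mul_sum]
          congr 1
          exact split_sum' (fun k => ρ i x.1 k) (fun l => η i l x.2)
  rw [hexp]
  refine Finset.sum_eq_zero fun i _ => ?_
  rcases mul_eq_zero.mp (hterm i (Finset.mem_univ i)) with h | h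
  · rw [h, zero_mul]
  rcases mul_eq_zero.mp h with h | h
  · have hker : ρ i *ᵥ (fun _ => 1) = 0 := by
      rw [← (hρ i).2.1.dotProduct_mulVec_zero_iff, ones_quad]; exact h
    have hr : (∑ k, ρ i x.1 k) = 0 := by
      have := congrFun hker x.1
      simpa [mulVec, dotProduct] using this
    rw [hr, zero_mul, mul_zero]
  · have hker : η i *ᵥ (fun _ => 1) = 0 := by
      rw [← (hη i).2.1.dotProduct_mulVec_zero_iff, ones_quad]; exact h
    have hrowη : (∑ l, η i x.2 l) = 0 := by
      have := congrFun hker x.2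
      simpa [mulVec, dotProduct] using this
    have hcol : (∑ l, η i l x.2) = 0 := by
      have hsym : ∑ l, η i l x.2 = star (∑ l, η i x.2 l) := by
        rw [star_sum]
        exact Finset.sum_congr rfl fun l _ => ((hη i).1.apply l x.2).symm
      rw [hsym, hrowη, star_zero]
    rw [hcol, mul_zero, mul_zero]
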